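/- Classical Butterfly Theorem: Let m be the midpoint of a chord ab of a circle in the Euclidean plane. Let rs and uv be two other chords of the circle passing through m. Let p be the intersection of line rv with line ab, and q the intersection of line us with line ab. Then the distance pm equals the distance qm. -/

import Mathlib

lemma cross_of_collinear {x y z : EuclideanSpace ℝ (Fin 2)}
    (h : Collinear ℝ ({x, y, z} : Set (EuclideanSpace ℝ (Fin 2)))) :
    (y 0 - x 0) * (z 1 - x 1) = (y 1 - x 1) * (z 0 - x 0) := by
  rw [collinear_iff_exists_forall_eq_smul_vadd] at h
  obtain ⟨p₀, d, hd⟩ := h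
  obtain ⟨tx, hx⟩ := hd x (by simp)
  obtain ⟨ty, hy⟩ := hd y (by simp)
  obtain ⟨tz, hz⟩ := hd z (by simp)
  have e0 : ∀ i, x i = tx * d i + p₀ i := fun i => by
    rw [hx]; rfl
  have e1 : ∀ i, y i = ty * d i + p₀ i := fun i => by
    rw [hy]; rfl
  have e2 : ∀ i, z i = tz * d i + p₀ i := fun i => by
    rw [hz]; rfl
  rw [e0 0, e0 1, e1 0, e1 1, e2 0, e2 1]; ring

lemma distsq_eq {x y : EuclideanSpace ℝ (Fin 2)} {ρ : ℝ} (h : dist x y = ρ) :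
    (x 0 - y 0)^2 + (x 1 - y 1)^2 = ρ^2 := by
  have := EuclideanSpace.dist_eq x y
  rw [h] at this
  have h2 : ρ^2 = ∑ i, dist (x i) (y i) ^ 2 := by
    rw [this, Real.sq_sqrt]
    positivity
  rw [h2, Fin.sum_univ_two, Real.dist_eq, Real.dist_eq, sq_abs, sq_abs]

lemma pt_ext {x y : EuclideanSpace ℝ (Fin 2)} (h0 : x 0 = y 0) (h1 : x 1 = y 1) : x = y := by
  ext i
  fin_cases i <;> assumption

lemma butterfly_core (E C Xr Yr Xs Ys Xu Yu Xv Yv Xp Xq : ℝ)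
    (hE : 0 < E)
    (hr : Xr^2 + Yr^2 = 2*C*Yr + E^2)
    (hs : Xs^2 + Ys^2 = 2*C*Ys + E^2)
    (hu : Xu^2 + Yu^2 = 2*C*Yu + E^2)
    (hv : Xv^2 + Yv^2 = 2*C*Yv + E^2)
    (h1 : Xr*Ys = Xs*Yr) (h2 : Xu*Yv = Xv*Yu)
    (hp : Xp*(Yv - Yr) = Xr*Yv - Xv*Yr)
    (hq : Xq*(Ys - Yu) = Xu*Ys - Xs*Yu)
    (hYr : Yr ≠ 0) (hYs : Ys ≠ 0) (hYu : Yu ≠ 0) (hYv : Yv ≠ 0)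
    (hrsne : ¬(Xr = Xs ∧ Yr = Ys)) (huvne : ¬(Xu = Xv ∧ Yu = Yv))
    (hrvne : ¬(Xr = Xv ∧ Yr = Yv)) (husne : ¬(Xu = Xs ∧ Yu = Ys)) :
    Xp^2 = Xq^2 := by
  have hSr : (0:ℝ) < Xr^2 + Yr^2 := by positivity
  have hSu : (0:ℝ) < Xu^2 + Yu^2 := by positivity
  have hYrs : Yr ≠ Ys := by
    intro h
    apply hrsne
    refine ⟨?_, h⟩
    have h0 : (Xr - Xs) * Yr = 0 := by linear_combination h1 + Xr * h
    rcases mul_eq_zero.mp h0 with h' | h'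
    · exact sub_eq_zero.mp h'
    · exact absurd h' hYr
  have hYuv : Yu ≠ Yv := by
    intro h
    apply huvne
    refine ⟨?_, h⟩
    have h0 : (Xu - Xv) * Yu = 0 := by linear_combination h2 + Xu * h
    rcases mul_eq_zero.mp h0 with h' | h'
    · exact sub_eq_zero.mp h'
    · exact absurd h' hYu
  have key1y : Ys * (Xr^2 + Yr^2) = -(E^2) * Yr := by
    have hb : (Ys - Yr) * (2*C*Yr*Ys + E^2*(Yr + Ys)) = 0 := by
      linear_combination Yr^2 * hs - Ys^2 * hr + (Xr*Ys + Xs*Yr) * h1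
    have hb2 : 2*C*Yr*Ys + E^2*(Yr + Ys) = 0 := by
      rcases mul_eq_zero.mp hb with h | h
      · exact absurd (by linarith) hYrs.symm
      · exact h
    linear_combination Ys * hr + hb2
  have key1x : Xs * (Xr^2 + Yr^2) = -(E^2) * Xr := by
    have h0 : Yr * (Xs * (Xr^2 + Yr^2) + E^2 * Xr) = 0 := by
      linear_combination (Xr^2 + Yr^2) * h1.symm + Xr * key1y
    rcases mul_eq_zero.mp h0 with h | h
    · exact absurd h hYr
    · linarith
  have key2y : Yv * (Xu^2 + Yu^2) = -(E^2) * Yu := by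
    have hb : (Yv - Yu) * (2*C*Yu*Yv + E^2*(Yu + Yv)) = 0 := by
      linear_combination Yu^2 * hv - Yv^2 * hu + (Xu*Yv + Xv*Yu) * h2
    have hb2 : 2*C*Yu*Yv + E^2*(Yu + Yv) = 0 := by
      rcases mul_eq_zero.mp hb with h | h
      · exact absurd (by linarith) hYuv.symm
      · exact h
    linear_combination Yv * hu + hb2
  have key2x : Xv * (Xu^2 + Yu^2) = -(E^2) * Xu := by
    have h0 : Yu * (Xv * (Xu^2 + Yu^2) + E^2 * Xu) = 0 := by
      linear_combination (Xu^2 + Yu^2) * h2.symm + Xu * key2y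
    rcases mul_eq_zero.mp h0 with h | h
    · exact absurd h hYu
    · linarith
  have hYrv : Yr ≠ Yv := by
    intro h
    apply hrvne
    refine ⟨?_, h⟩
    have h0 : (Xr - Xv) * Yv = 0 := by linear_combination -hp - Xp * h + Xv * h
    rcases mul_eq_zero.mp h0 with h' | h'
    · exact sub_eq_zero.mp h'
    · exact absurd h' hYv
  have hYsu : Yu ≠ Ys := by
    intro h
    apply husne
    refine ⟨?_, h⟩
    have h0 : (Xu - Xs) * Ys = 0 := by linear_combination -hq - Xq * h + Xs * h
    rcases mul_eq_zero.mp h0 with h' | h'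
    · exact sub_eq_zero.mp h'
    · exact absurd h' hYs
  set D : ℝ := E^2*Yu + Yr*(Xu^2 + Yu^2) with hD
  have hDne : D ≠ 0 := by
    have hDeq : D = -((Yv - Yr) * (Xu^2 + Yu^2)) := by
      rw [hD]; linear_combination key2y
    rw [hDeq]
    intro h
    rcases mul_eq_zero.mp (neg_eq_zero.mp h) with h' | h'
    · exact hYrv (by linarith)
    · linarith
  have hXpD : Xp * D = E^2 * (Xr*Yu - Xu*Yr) := by
    rw [hD]
    linear_combination (Xp - Xr) * key2y + Yr * key2x - (Xu^2 + Yu^2) * hp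
  have hXqD : Xq * D = -(E^2) * (Xr*Yu - Xu*Yr) := by
    have hDD : D = E^2*Yr + Yu*(Xr^2 + Yr^2) := by
      rw [hD]; linear_combination Yr * hu - Yu * hr
    rw [hDD]
    linear_combination (Xq - Xu) * key1y + Yu * key1x - (Xr^2 + Yr^2) * hq
  have hfin : Xp = -Xq := mul_right_cancel₀ hDne (by linear_combination hXpD + hXqD)
  rw [hfin]; ring

set_option maxHeartbeats 1600000 in
lemma butterfly_coords (a0 a1 m0 m1 o0 o1 r0 r1 s0 s1 u0 u1 v0 v1 p0 p1 q0 q1 ρ : ℝ)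
    (ca : (a0-o0)^2+(a1-o1)^2 = ρ^2)
    (cb : (2*m0-a0-o0)^2+(2*m1-a1-o1)^2 = ρ^2)
    (cr : (r0-o0)^2+(r1-o1)^2 = ρ^2) (cs : (s0-o0)^2+(s1-o1)^2 = ρ^2) (cu : (u0-o0)^2+(u1-o1)^2 = ρ^2) (cv : (v0-o0)^2+(v1-o1)^2 = ρ^2)
    (crs : (s0-r0)*(m1-r1) = (s1-r1)*(m0-r0))
    (cuv : (v0-u0)*(m1-u1) = (v1-u1)*(m0-u0))
    (crvp : (v0-r0)*(p1-r1) = (v1-r1)*(p0-r0))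
    (cabp : (2*m0-2*a0)*(p1-a1) = (2*m1-2*a1)*(p0-a0))
    (cusq : (s0-u0)*(q1-u1) = (s1-u1)*(q0-u0))
    (cabq : (2*m0-2*a0)*(q1-a1) = (2*m1-2*a1)*(q0-a0))
    (hab : ¬(a0 = 2*m0-a0 ∧ a1 = 2*m1-a1))
    (hrs : ¬(r0 = s0 ∧ r1 = s1)) (huv : ¬(u0 = v0 ∧ u1 = v1))
    (hrv : ¬(r0 = v0 ∧ r1 = v1)) (hus : ¬(u0 = s0 ∧ u1 = s1))
    (hra : ¬(r0 = a0 ∧ r1 = a1)) (hrb : ¬(r0 = 2*m0-a0 ∧ r1 = 2*m1-a1))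
    (hsa : ¬(s0 = a0 ∧ s1 = a1)) (hsb : ¬(s0 = 2*m0-a0 ∧ s1 = 2*m1-a1))
    (hua : ¬(u0 = a0 ∧ u1 = a1)) (hub : ¬(u0 = 2*m0-a0 ∧ u1 = 2*m1-a1))
    (hva : ¬(v0 = a0 ∧ v1 = a1)) (hvb : ¬(v0 = 2*m0-a0 ∧ v1 = 2*m1-a1)) :
    (p0-m0)^2+(p1-m1)^2 = (q0-m0)^2+(q1-m1)^2 := by
  have ham : ¬(a0 = m0 ∧ a1 = m1) := by
    rintro ⟨h0, h1⟩; exact hab ⟨by linarith, by linarith⟩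
  have hEne : ((a0-m0)^2+(a1-m1)^2) ≠ 0 := by
    intro h
    apply ham
    constructor <;> nlinarith [sq_nonneg (a0-m0), sq_nonneg (a1-m1)]
  have hE : 0 < ((a0-m0)^2+(a1-m1)^2) := lt_of_le_of_ne (by positivity) (Ne.symm hEne)
  have hXo : (a0-m0)*(o0-m0)+(a1-m1)*(o1-m1) = 0 := by linear_combination (cb - ca)/4
  have inj : ∀ x0 x1 y0 y1 : ℝ,
      (a0-m0)*(x0-m0)+(a1-m1)*(x1-m1) = (a0-m0)*(y0-m0)+(a1-m1)*(y1-m1) →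
      (a0-m0)*(x1-m1)-(a1-m1)*(x0-m0) = (a0-m0)*(y1-m1)-(a1-m1)*(y0-m0) →
      x0 = y0 ∧ x1 = y1 := by
    intro x0 x1 y0 y1 hX hY
    constructor
    · have h : ((a0-m0)^2+(a1-m1)^2)*(x0-y0) = 0 := by linear_combination (a0-m0)*hX - (a1-m1)*hY
      rcases mul_eq_zero.mp h with h' | h'
      · exact absurd h' hEne
      · exact sub_eq_zero.mp h'
    · have h : ((a0-m0)^2+(a1-m1)^2)*(x1-y1) = 0 := by linear_combination (a1-m1)*hX + (a0-m0)*hY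
      rcases mul_eq_zero.mp h with h' | h'
      · exact absurd h' hEne
      · exact sub_eq_zero.mp h'
  have hcr : ((a0-m0)*(r0-m0)+(a1-m1)*(r1-m1))^2 + ((a0-m0)*(r1-m1)-(a1-m1)*(r0-m0))^2 = 2*((a0-m0)*(o1-m1)-(a1-m1)*(o0-m0))*((a0-m0)*(r1-m1)-(a1-m1)*(r0-m0)) + ((a0-m0)^2+(a1-m1)^2)^2 := by
    linear_combination ((a0-m0)^2+(a1-m1)^2)*cr - ((a0-m0)^2+(a1-m1)^2)*ca + (2*(((a0-m0)*(r0-m0)+(a1-m1)*(r1-m1)) - ((a0-m0)^2+(a1-m1)^2)))*hXo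
  have hcs : ((a0-m0)*(s0-m0)+(a1-m1)*(s1-m1))^2 + ((a0-m0)*(s1-m1)-(a1-m1)*(s0-m0))^2 = 2*((a0-m0)*(o1-m1)-(a1-m1)*(o0-m0))*((a0-m0)*(s1-m1)-(a1-m1)*(s0-m0)) + ((a0-m0)^2+(a1-m1)^2)^2 := by
    linear_combination ((a0-m0)^2+(a1-m1)^2)*cs - ((a0-m0)^2+(a1-m1)^2)*ca + (2*(((a0-m0)*(s0-m0)+(a1-m1)*(s1-m1)) - ((a0-m0)^2+(a1-m1)^2)))*hXo
  have hcu : ((a0-m0)*(u0-m0)+(a1-m1)*(u1-m1))^2 + ((a0-m0)*(u1-m1)-(a1-m1)*(u0-m0))^2 = 2*((a0-m0)*(o1-m1)-(a1-m1)*(o0-m0))*((a0-m0)*(u1-m1)-(a1-m1)*(u0-m0)) + ((a0-m0)^2+(a1-m1)^2)^2 := by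
    linear_combination ((a0-m0)^2+(a1-m1)^2)*cu - ((a0-m0)^2+(a1-m1)^2)*ca + (2*(((a0-m0)*(u0-m0)+(a1-m1)*(u1-m1)) - ((a0-m0)^2+(a1-m1)^2)))*hXo
  have hcv : ((a0-m0)*(v0-m0)+(a1-m1)*(v1-m1))^2 + ((a0-m0)*(v1-m1)-(a1-m1)*(v0-m0))^2 = 2*((a0-m0)*(o1-m1)-(a1-m1)*(o0-m0))*((a0-m0)*(v1-m1)-(a1-m1)*(v0-m0)) + ((a0-m0)^2+(a1-m1)^2)^2 := by
    linear_combination ((a0-m0)^2+(a1-m1)^2)*cv - ((a0-m0)^2+(a1-m1)^2)*ca + (2*(((a0-m0)*(v0-m0)+(a1-m1)*(v1-m1)) - ((a0-m0)^2+(a1-m1)^2)))*hXo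
  have h1 : ((a0-m0)*(r0-m0)+(a1-m1)*(r1-m1))*((a0-m0)*(s1-m1)-(a1-m1)*(s0-m0)) = ((a0-m0)*(s0-m0)+(a1-m1)*(s1-m1))*((a0-m0)*(r1-m1)-(a1-m1)*(r0-m0)) := by linear_combination ((a0-m0)^2+(a1-m1)^2)*crs
  have h2 : ((a0-m0)*(u0-m0)+(a1-m1)*(u1-m1))*((a0-m0)*(v1-m1)-(a1-m1)*(v0-m0)) = ((a0-m0)*(v0-m0)+(a1-m1)*(v1-m1))*((a0-m0)*(u1-m1)-(a1-m1)*(u0-m0)) := by linear_combination ((a0-m0)^2+(a1-m1)^2)*cuv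
  have hYp : (a0-m0)*(p1-m1)-(a1-m1)*(p0-m0) = 0 := by linear_combination (-1/2)*cabp
  have hYq : (a0-m0)*(q1-m1)-(a1-m1)*(q0-m0) = 0 := by linear_combination (-1/2)*cabq
  have hp : ((a0-m0)*(p0-m0)+(a1-m1)*(p1-m1))*(((a0-m0)*(v1-m1)-(a1-m1)*(v0-m0)) - ((a0-m0)*(r1-m1)-(a1-m1)*(r0-m0))) = ((a0-m0)*(r0-m0)+(a1-m1)*(r1-m1))*((a0-m0)*(v1-m1)-(a1-m1)*(v0-m0)) - ((a0-m0)*(v0-m0)+(a1-m1)*(v1-m1))*((a0-m0)*(r1-m1)-(a1-m1)*(r0-m0)) := by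
    linear_combination (((a0-m0)*(v0-m0)+(a1-m1)*(v1-m1)) - ((a0-m0)*(r0-m0)+(a1-m1)*(r1-m1)))*hYp - ((a0-m0)^2+(a1-m1)^2)*crvp
  have hq : ((a0-m0)*(q0-m0)+(a1-m1)*(q1-m1))*(((a0-m0)*(s1-m1)-(a1-m1)*(s0-m0)) - ((a0-m0)*(u1-m1)-(a1-m1)*(u0-m0))) = ((a0-m0)*(u0-m0)+(a1-m1)*(u1-m1))*((a0-m0)*(s1-m1)-(a1-m1)*(s0-m0)) - ((a0-m0)*(s0-m0)+(a1-m1)*(s1-m1))*((a0-m0)*(u1-m1)-(a1-m1)*(u0-m0)) := by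
    linear_combination (((a0-m0)*(s0-m0)+(a1-m1)*(s1-m1)) - ((a0-m0)*(u0-m0)+(a1-m1)*(u1-m1)))*hYq - ((a0-m0)^2+(a1-m1)^2)*cusq
  have hYr : ((a0-m0)*(r1-m1)-(a1-m1)*(r0-m0)) ≠ 0 := by
    intro h
    have hfac : (((a0-m0)*(r0-m0)+(a1-m1)*(r1-m1)) - ((a0-m0)^2+(a1-m1)^2))*(((a0-m0)*(r0-m0)+(a1-m1)*(r1-m1)) + ((a0-m0)^2+(a1-m1)^2)) = 0 := by
      linear_combination hcr + (2*((a0-m0)*(o1-m1)-(a1-m1)*(o0-m0)) - ((a0-m0)*(r1-m1)-(a1-m1)*(r0-m0)))*h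
    rcases mul_eq_zero.mp hfac with h' | h'
    · have hXa : ((a0-m0)*(r0-m0)+(a1-m1)*(r1-m1)) = (a0-m0)*(a0-m0)+(a1-m1)*(a1-m1) := by linear_combination h'
      have hYa : ((a0-m0)*(r1-m1)-(a1-m1)*(r0-m0)) = (a0-m0)*(a1-m1)-(a1-m1)*(a0-m0) := by linear_combination h
      exact hra (inj r0 r1 a0 a1 hXa hYa)
    · have hXb : ((a0-m0)*(r0-m0)+(a1-m1)*(r1-m1)) = (a0-m0)*((2*m0-a0)-m0)+(a1-m1)*((2*m1-a1)-m1) := by linear_combination h'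
      have hYb : ((a0-m0)*(r1-m1)-(a1-m1)*(r0-m0)) = (a0-m0)*((2*m1-a1)-m1)-(a1-m1)*((2*m0-a0)-m0) := by linear_combination h
      exact hrb (inj r0 r1 (2*m0-a0) (2*m1-a1) hXb hYb)
  have hYs : ((a0-m0)*(s1-m1)-(a1-m1)*(s0-m0)) ≠ 0 := by
    intro h
    have hfac : (((a0-m0)*(s0-m0)+(a1-m1)*(s1-m1)) - ((a0-m0)^2+(a1-m1)^2))*(((a0-m0)*(s0-m0)+(a1-m1)*(s1-m1)) + ((a0-m0)^2+(a1-m1)^2)) = 0 := by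
      linear_combination hcs + (2*((a0-m0)*(o1-m1)-(a1-m1)*(o0-m0)) - ((a0-m0)*(s1-m1)-(a1-m1)*(s0-m0)))*h
    rcases mul_eq_zero.mp hfac with h' | h'
    · have hXa : ((a0-m0)*(s0-m0)+(a1-m1)*(s1-m1)) = (a0-m0)*(a0-m0)+(a1-m1)*(a1-m1) := by linear_combination h'
      have hYa : ((a0-m0)*(s1-m1)-(a1-m1)*(s0-m0)) = (a0-m0)*(a1-m1)-(a1-m1)*(a0-m0) := by linear_combination h
      exact hsa (inj s0 s1 a0 a1 hXa hYa)
    · have hXb : ((a0-m0)*(s0-m0)+(a1-m1)*(s1-m1)) = (a0-m0)*((2*m0-a0)-m0)+(a1-m1)*((2*m1-a1)-m1) := by linear_combination h'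
      have hYb : ((a0-m0)*(s1-m1)-(a1-m1)*(s0-m0)) = (a0-m0)*((2*m1-a1)-m1)-(a1-m1)*((2*m0-a0)-m0) := by linear_combination h
      exact hsb (inj s0 s1 (2*m0-a0) (2*m1-a1) hXb hYb)
  have hYu : ((a0-m0)*(u1-m1)-(a1-m1)*(u0-m0)) ≠ 0 := by
    intro h
    have hfac : (((a0-m0)*(u0-m0)+(a1-m1)*(u1-m1)) - ((a0-m0)^2+(a1-m1)^2))*(((a0-m0)*(u0-m0)+(a1-m1)*(u1-m1)) + ((a0-m0)^2+(a1-m1)^2)) = 0 := by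
      linear_combination hcu + (2*((a0-m0)*(o1-m1)-(a1-m1)*(o0-m0)) - ((a0-m0)*(u1-m1)-(a1-m1)*(u0-m0)))*h
    rcases mul_eq_zero.mp hfac with h' | h'
    · have hXa : ((a0-m0)*(u0-m0)+(a1-m1)*(u1-m1)) = (a0-m0)*(a0-m0)+(a1-m1)*(a1-m1) := by linear_combination h'
      have hYa : ((a0-m0)*(u1-m1)-(a1-m1)*(u0-m0)) = (a0-m0)*(a1-m1)-(a1-m1)*(a0-m0) := by linear_combination h
      exact hua (inj u0 u1 a0 a1 hXa hYa)
    · have hXb : ((a0-m0)*(u0-m0)+(a1-m1)*(u1-m1)) = (a0-m0)*((2*m0-a0)-m0)+(a1-m1)*((2*m1-a1)-m1) := by linear_combination h'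
      have hYb : ((a0-m0)*(u1-m1)-(a1-m1)*(u0-m0)) = (a0-m0)*((2*m1-a1)-m1)-(a1-m1)*((2*m0-a0)-m0) := by linear_combination h
      exact hub (inj u0 u1 (2*m0-a0) (2*m1-a1) hXb hYb)
  have hYv : ((a0-m0)*(v1-m1)-(a1-m1)*(v0-m0)) ≠ 0 := by
    intro h
    have hfac : (((a0-m0)*(v0-m0)+(a1-m1)*(v1-m1)) - ((a0-m0)^2+(a1-m1)^2))*(((a0-m0)*(v0-m0)+(a1-m1)*(v1-m1)) + ((a0-m0)^2+(a1-m1)^2)) = 0 := by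
      linear_combination hcv + (2*((a0-m0)*(o1-m1)-(a1-m1)*(o0-m0)) - ((a0-m0)*(v1-m1)-(a1-m1)*(v0-m0)))*h
    rcases mul_eq_zero.mp hfac with h' | h'
    · have hXa : ((a0-m0)*(v0-m0)+(a1-m1)*(v1-m1)) = (a0-m0)*(a0-m0)+(a1-m1)*(a1-m1) := by linear_combination h'
      have hYa : ((a0-m0)*(v1-m1)-(a1-m1)*(v0-m0)) = (a0-m0)*(a1-m1)-(a1-m1)*(a0-m0) := by linear_combination h
      exact hva (inj v0 v1 a0 a1 hXa hYa)
    · have hXb : ((a0-m0)*(v0-m0)+(a1-m1)*(v1-m1)) = (a0-m0)*((2*m0-a0)-m0)+(a1-m1)*((2*m1-a1)-m1) := by linear_combination h'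
      have hYb : ((a0-m0)*(v1-m1)-(a1-m1)*(v0-m0)) = (a0-m0)*((2*m1-a1)-m1)-(a1-m1)*((2*m0-a0)-m0) := by linear_combination h
      exact hvb (inj v0 v1 (2*m0-a0) (2*m1-a1) hXb hYb)
  have hrsne : ¬(((a0-m0)*(r0-m0)+(a1-m1)*(r1-m1)) = ((a0-m0)*(s0-m0)+(a1-m1)*(s1-m1)) ∧ ((a0-m0)*(r1-m1)-(a1-m1)*(r0-m0)) = ((a0-m0)*(s1-m1)-(a1-m1)*(s0-m0))) := by
    rintro ⟨hX, hY⟩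
    exact hrs (inj r0 r1 s0 s1 hX hY)
  have huvne : ¬(((a0-m0)*(u0-m0)+(a1-m1)*(u1-m1)) = ((a0-m0)*(v0-m0)+(a1-m1)*(v1-m1)) ∧ ((a0-m0)*(u1-m1)-(a1-m1)*(u0-m0)) = ((a0-m0)*(v1-m1)-(a1-m1)*(v0-m0))) := by
    rintro ⟨hX, hY⟩
    exact huv (inj u0 u1 v0 v1 hX hY)
  have hrvne : ¬(((a0-m0)*(r0-m0)+(a1-m1)*(r1-m1)) = ((a0-m0)*(v0-m0)+(a1-m1)*(v1-m1)) ∧ ((a0-m0)*(r1-m1)-(a1-m1)*(r0-m0)) = ((a0-m0)*(v1-m1)-(a1-m1)*(v0-m0))) := by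
    rintro ⟨hX, hY⟩
    exact hrv (inj r0 r1 v0 v1 hX hY)
  have husne : ¬(((a0-m0)*(u0-m0)+(a1-m1)*(u1-m1)) = ((a0-m0)*(s0-m0)+(a1-m1)*(s1-m1)) ∧ ((a0-m0)*(u1-m1)-(a1-m1)*(u0-m0)) = ((a0-m0)*(s1-m1)-(a1-m1)*(s0-m0))) := by
    rintro ⟨hX, hY⟩
    exact hus (inj u0 u1 s0 s1 hX hY)
  have hcore := butterfly_core ((a0-m0)^2+(a1-m1)^2) ((a0-m0)*(o1-m1)-(a1-m1)*(o0-m0)) ((a0-m0)*(r0-m0)+(a1-m1)*(r1-m1)) ((a0-m0)*(r1-m1)-(a1-m1)*(r0-m0)) ((a0-m0)*(s0-m0)+(a1-m1)*(s1-m1)) ((a0-m0)*(s1-m1)-(a1-m1)*(s0-m0)) ((a0-m0)*(u0-m0)+(a1-m1)*(u1-m1)) ((a0-m0)*(u1-m1)-(a1-m1)*(u0-m0)) ((a0-m0)*(v0-m0)+(a1-m1)*(v1-m1)) ((a0-m0)*(v1-m1)-(a1-m1)*(v0-m0)) ((a0-m0)*(p0-m0)+(a1-m1)*(p1-m1)) ((a0-m0)*(q0-m0)+(a1-m1)*(q1-m1))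 hE hcr hcs hcu hcv h1 h2 hp hq hYr hYs hYu hYv hrsne huvne hrvne husne
  refine mul_left_cancel₀ hEne ?_
  linear_combination hcore + ((a0-m0)*(p1-m1)-(a1-m1)*(p0-m0))*hYp - ((a0-m0)*(q1-m1)-(a1-m1)*(q0-m0))*hYq


/-- **Classical Butterfly Theorem.**  Let `m` be the midpoint of a chord `ab` of a
circle with centre `o` and radius `ρ` in the Euclidean plane, and let `rs` and `uv`
be two other chords of the circle through `m`.  If `p = rv ∩ ab` and `q = us ∩ ab`,
then `dist p m = dist q m`. -/
theorem butterfly_circle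
    (o a b r s u v m p q : EuclideanSpace ℝ (Fin 2)) (ρ : ℝ)
    -- `a, b, r, s, u, v` are pairwise distinct points on the circle :
    (hdistinct : [a, b, r, s, u, v].Pairwise (· ≠ ·))
    (hac : dist a o = ρ) (hbc : dist b o = ρ)
    (hrc : dist r o = ρ) (hsc : dist s o = ρ)
    (huc : dist u o = ρ) (hvc : dist v o = ρ)
    -- `m` is the midpoint of the chord `ab` :
    (hm : m = midpoint ℝ a b)
    -- the chords `rs` and `uv` pass through `m` :
    (hrs : Collinear ℝ ({r, s, m} : Set (EuclideanSpace ℝ (Fin 2))))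
    (huv : Collinear ℝ ({u, v, m} : Set (EuclideanSpace ℝ (Fin 2))))
    -- `p` is the intersection of line `rv` with line `ab` :
    (hp1 : Collinear ℝ ({r, v, p} : Set (EuclideanSpace ℝ (Fin 2))))
    (hp2 : Collinear ℝ ({a, b, p} : Set (EuclideanSpace ℝ (Fin 2))))
    -- `q` is the intersection of line `us` with line `ab` :
    (hq1 : Collinear ℝ ({u, s, q} : Set (EuclideanSpace ℝ (Fin 2))))
    (hq2 : Collinear ℝ ({a, b, q} : Set (EuclideanSpace ℝ (Fin 2)))) :
    dist p m = dist q m := by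
  simp only [List.pairwise_cons, List.mem_cons, List.not_mem_nil, or_false,
    List.mem_singleton, forall_eq_or_imp, forall_eq, List.Pairwise.nil] at hdistinct
  obtain ⟨⟨hab, har, has, hau, hav⟩, ⟨hbr, hbs, hbu, hbv⟩, ⟨hrsne, hru, hrv⟩,
    ⟨hsu, hsv⟩, huvne, -⟩ := hdistinct
  -- midpoint coordinates
  have hm0 : m 0 = (a 0 + b 0)/2 := by
    rw [hm]
    simp [midpoint, AffineMap.lineMap_apply, PiLp.add_apply, PiLp.smul_apply,
      PiLp.sub_apply, smul_eq_mul]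
    ring
  have hm1 : m 1 = (a 1 + b 1)/2 := by
    rw [hm]
    simp [midpoint, AffineMap.lineMap_apply, PiLp.add_apply, PiLp.smul_apply,
      PiLp.sub_apply, smul_eq_mul]
    ring
  have hb0 : b 0 = 2 * m 0 - a 0 := by linarith
  have hb1 : b 1 = 2 * m 1 - a 1 := by linarith
  -- circle equations
  have ca := distsq_eq hac
  have cb := distsq_eq hbc
  rw [hb0, hb1] at cb
  have cr := distsq_eq hrc
  have cs := distsq_eq hsc
  have cu := distsq_eq huc
  have cv := distsq_eq hvc
  -- collinearity cross products
  have crs := cross_of_collinear hrs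
  have cuv := cross_of_collinear huv
  have crvp := cross_of_collinear hp1
  have cabp := cross_of_collinear hp2
  have cusq := cross_of_collinear hq1
  have cabq := cross_of_collinear hq2
  rw [hb0, hb1] at cabp cabq
  have cabp' : (2*(m 0)-2*(a 0))*(p 1-(a 1)) = (2*(m 1)-2*(a 1))*(p 0-(a 0)) := by
    linear_combination cabp
  have cabq' : (2*(m 0)-2*(a 0))*(q 1-(a 1)) = (2*(m 1)-2*(a 1))*(q 0-(a 0)) := by
    linear_combination cabq
  -- coordinate distinctness
  have coord : ∀ x y : EuclideanSpace ℝ (Fin 2), x ≠ y → ¬(x 0 = y 0 ∧ x 1 = y 1) :=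
    fun x y hxy ⟨h0, h1⟩ => hxy (pt_ext h0 h1)
  have dab := coord a b hab
  rw [hb0, hb1] at dab
  have mkb : ∀ x : EuclideanSpace ℝ (Fin 2), x ≠ b → ¬(x 0 = 2*m 0-a 0 ∧ x 1 = 2*m 1-a 1) := by
    intro x hx h
    exact coord x b hx ⟨by rw [hb0]; exact h.1, by rw [hb1]; exact h.2⟩
  -- final goal in coordinates
  rw [EuclideanSpace.dist_eq, EuclideanSpace.dist_eq]
  congr 1
  rw [Fin.sum_univ_two, Fin.sum_univ_two, Real.dist_eq, Real.dist_eq, Real.dist_eq,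
    Real.dist_eq, sq_abs, sq_abs, sq_abs, sq_abs]
  exact butterfly_coords (a 0) (a 1) (m 0) (m 1) (o 0) (o 1) (r 0) (r 1) (s 0) (s 1)
    (u 0) (u 1) (v 0) (v 1) (p 0) (p 1) (q 0) (q 1) ρ
    ca cb cr cs cu cv crs cuv crvp cabp' cusq cabq'
    dab
    (coord r s hrsne) (coord u v huvne) (coord r v hrv) (coord u s hsu.symm)
    (coord r a har.symm) (mkb r hbr.symm)
    (coord s a has.symm) (mkb s hbs.symm)
    (coord u a hau.symm) (mkb u hbu.symm)
    (coord v a hav.symm) (mkb v hbv.symm)
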